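/- Let G be a connected graph on n vertices whose distance matrix D(G) has smallest eigenvalue equal to -2 with multiplicity n - k, where 2 ≤ k ≤ n - 1. Then G is a complete k-partite graph. -/

import Mathlib

open Polynomial Matrix

section aux
variable {n : Type*} [Fintype n] [DecidableEq n]

lemma myCharpolyDiag (d : n → ℝ) :
    (Matrix.diagonal d).charpoly = ∏ i, (X - C (d i)) := by
  have h : charmatrix (Matrix.diagonal d)
      = Matrix.diagonal (fun i => (X : ℝ[X]) - C (d i)) := by
    ext i j
    by_cases hij : i = j
    · subst hij; simp
    · simp [charmatrix_apply_ne _ _ _ hij, Matrix.diagonal_apply_ne _ hij]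
  rw [Matrix.charpoly, h, Matrix.det_diagonal]

lemma myCharpolyConj (U : Matrix.unitaryGroup n ℝ) (A : Matrix n n ℝ) :
    ((U : Matrix n n ℝ) * A * (star (U : Matrix n n ℝ))).charpoly = A.charpoly := by
  have hU : (U : Matrix n n ℝ) * star (U : Matrix n n ℝ) = 1 :=
    Matrix.mem_unitaryGroup_iff.mp U.2
  set f : Matrix n n ℝ →+* Matrix n n ℝ[X] := (C : ℝ →+* ℝ[X]).mapMatrix with hf
  have hone : f (U : Matrix n n ℝ) * f (star (U : Matrix n n ℝ)) = 1 := by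
    rw [← _root_.map_mul, hU, _root_.map_one]
  have key : charmatrix ((U : Matrix n n ℝ) * A * star (U : Matrix n n ℝ))
      = f (U : Matrix n n ℝ) * charmatrix A * f (star (U : Matrix n n ℝ)) := by
    show _ = f _ * (Matrix.scalar n (X : ℝ[X]) - f A) * f _
    rw [Matrix.mul_sub, Matrix.sub_mul, charmatrix]
    congr 1
    · symm
      rw [show f (U : Matrix n n ℝ) * Matrix.scalar n (X : ℝ[X])
          = Matrix.scalar n (X : ℝ[X]) * f (U : Matrix n n ℝ) from
          (Matrix.scalar_commute (X : ℝ[X]) (fun r => Commute.all _ _)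
            (f (U : Matrix n n ℝ))).symm,
        mul_assoc, hone, mul_one]
    · rw [← _root_.map_mul, ← _root_.map_mul]
  rw [Matrix.charpoly, key, det_mul, det_mul, Matrix.charpoly]
  rw [mul_comm (det (f (U : Matrix n n ℝ)))]
  rw [mul_assoc, ← det_mul, hone, det_one, mul_one]

lemma myCharpolyHerm {A : Matrix n n ℝ} (hA : A.IsHermitian) :
    A.charpoly = ∏ i, (X - C (hA.eigenvalues i)) := by
  conv_lhs => rw [hA.spectral_theorem]
  have : (RCLike.ofReal ∘ hA.eigenvalues : n → ℝ) = hA.eigenvalues := by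
    funext i; simp
  rw [this, Unitary.conjStarAlgAut_apply, myCharpolyConj, myCharpolyDiag]

lemma myQuad4 {V : Type*} [Fintype V] [DecidableEq V] (B : Matrix V V ℝ) (a b c d : V) :
    (Pi.single a 1 + Pi.single b 1 - Pi.single c 1 - Pi.single d (1:ℝ)) ⬝ᵥ
      (B *ᵥ (Pi.single a 1 + Pi.single b 1 - Pi.single c 1 - Pi.single d 1)) =
    (B a a + B a b - B a c - B a d) + (B b a + B b b - B b c - B b d)
      - (B c a + B c b - B c c - B c d) - (B d a + B d b - B d c - B d d) := by
  simp [Matrix.mulVec_add, Matrix.mulVec_sub, Matrix.mulVec_single, dotProduct_add,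
    dotProduct_sub, add_dotProduct, sub_dotProduct, single_dotProduct]
  ring

lemma myQuad2 {V : Type*} [Fintype V] [DecidableEq V] (B : Matrix V V ℝ) (a b : V) :
    (Pi.single a 1 - Pi.single b (1:ℝ)) ⬝ᵥ (B *ᵥ (Pi.single a 1 - Pi.single b 1)) =
    B a a - B a b - B b a + B b b := by
  simp [Matrix.mulVec_sub, Matrix.mulVec_single, dotProduct_sub,
    sub_dotProduct, single_dotProduct]
  ring

lemma myStep {V : Type*} (G : SimpleGraph V) (hG : G.Connected) {u v : V}
    (h : 1 ≤ G.dist u v) : ∃ w, G.Adj u w ∧ G.dist w v = G.dist u v - 1 := by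
  obtain ⟨p, hp⟩ := SimpleGraph.exists_walk_of_dist_ne_zero (Nat.one_le_iff_ne_zero.mp h)
  cases p with
  | nil => simp at h
  | @cons _ w _ ha q =>
    refine ⟨w, ha, ?_⟩
    rw [SimpleGraph.Walk.length_cons] at hp
    have h1 : G.dist w v ≤ q.length := SimpleGraph.dist_le q
    have h2 : G.dist u v ≤ G.dist u w + G.dist w v := hG.dist_triangle
    have h3 : G.dist u w ≤ 1 := by
      simpa using SimpleGraph.dist_le (ha.toWalk)
    omega

end aux

/-- If the distance matrix of a connected graph `G` on `n` vertices has smallest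
eigenvalue `-2` with multiplicity `n - k`, `2 ≤ k ≤ n - 1`, then `G` is a complete
`k`-partite graph. -/
theorem completeMultipartite_of_dist_eigenvalue {V : Type*} [Fintype V] [DecidableEq V]
    (G : SimpleGraph V) (hG : G.Connected) (k : ℕ) (hk2 : 2 ≤ k)
    (hk1 : k ≤ Fintype.card V - 1)
    (D : Matrix V V ℝ) (hD : D = Matrix.of fun u v => (G.dist u v : ℝ))
    (hmult : D.charpoly.rootMultiplicity (-2) = Fintype.card V - k)
    (hmin : ∀ μ : ℝ, D.charpoly.IsRoot μ → -2 ≤ μ) :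
    ∃ P : V → Fin k, Function.Surjective P ∧ ∀ u v, G.Adj u v ↔ P u ≠ P v := by
  classical
  have hVpos : 0 < Fintype.card V := by
    have := hk1; have := hk2; omega
  -- D is symmetric (Hermitian over ℝ)
  have hherm : D.IsHermitian := by
    rw [hD]
    ext i j
    simp [Matrix.conjTranspose_apply, SimpleGraph.dist_comm]
  set eig : V → ℝ := hherm.eigenvalues with heig
  have hch : D.charpoly = ∏ i, (X - C (eig i)) := myCharpolyHerm hherm
  -- all eigenvalues ≥ -2
  have heig_ge : ∀ i, -2 ≤ eig i := by
    intro i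
    apply hmin
    rw [hch, Polynomial.IsRoot, Polynomial.eval_prod]
    exact Finset.prod_eq_zero (Finset.mem_univ i) (by simp)
  -- number of eigenvalues equal to -2
  have hcard2 : (Finset.univ.filter fun i => eig i = -2).card = Fintype.card V - k := by
    rw [← hmult, hch]
    rw [← Polynomial.count_roots]
    have : (∏ i, (X - C (eig i))) = (Multiset.map (fun a => X - C a)
        ((Finset.univ.val).map eig)).prod := by
      rw [Multiset.map_map]
      rfl
    rw [this, Polynomial.roots_multiset_prod_X_sub_C, Multiset.count_map]
    rw [Finset.card_filter]
    rw [Finset.sum_boole]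
    rw [Multiset.filter_congr (fun x _ => by rw [eq_comm])]
    simp [Finset.filter]
  -- the matrix B = D + 2I
  set B : Matrix V V ℝ := D + (2:ℝ) • (1 : Matrix V V ℝ) with hBdef
  set U := hherm.eigenvectorUnitary with hU
  have hUU : (U : Matrix V V ℝ) * star (U : Matrix V V ℝ) = 1 :=
    Matrix.mem_unitaryGroup_iff.mp U.2
  have hBspec : B = (U : Matrix V V ℝ) * Matrix.diagonal (fun i => eig i + 2)
      * star (U : Matrix V V ℝ) := by
    have hsp := hherm.spectral_theorem
    have hco : (RCLike.ofReal ∘ eig : V → ℝ) = eig := by funext i; simp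
    rw [hco, Unitary.conjStarAlgAut_apply] at hsp
    have hdd : Matrix.diagonal (fun i => eig i + 2)
        = Matrix.diagonal eig + (2:ℝ) • (1 : Matrix V V ℝ) := by
      rw [Matrix.smul_one_eq_diagonal, Matrix.diagonal_add]
    rw [hdd, Matrix.mul_add, Matrix.add_mul, ← hsp, hBdef]
    congr 1
    rw [Matrix.mul_smul, Matrix.smul_mul, Matrix.mul_one, hUU]
  have hBpsd : B.PosSemidef := by
    rw [hBspec, Matrix.star_eq_conjTranspose]
    exact (Matrix.posSemidef_diagonal_iff.mpr
      (fun i => by have := heig_ge i; linarith)).mul_mul_conjTranspose_same _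
  have hq : ∀ x : V → ℝ, 0 ≤ x ⬝ᵥ (B *ᵥ x) := by
    intro x
    have := hBpsd.dotProduct_mulVec_nonneg x
    simpa using this
  have hdetU : IsUnit (U : Matrix V V ℝ).det ∧ IsUnit (star (U : Matrix V V ℝ)).det := by
    have h1 : (U : Matrix V V ℝ).det * (star (U : Matrix V V ℝ)).det = 1 := by
      rw [← Matrix.det_mul, hUU, Matrix.det_one]
    exact ⟨IsUnit.of_mul_eq_one _ h1, IsUnit.of_mul_eq_one _ (by rwa [mul_comm] at h1)⟩
  have hBrank : B.rank = k := by
    rw [hBspec, Matrix.rank_mul_eq_left_of_isUnit_det _ _ hdetU.2,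
      Matrix.rank_mul_eq_right_of_isUnit_det _ _ hdetU.1, Matrix.rank_diagonal]
    have hcs : Fintype.card {i // eig i + 2 ≠ 0}
        = (Finset.univ.filter fun i => ¬ (eig i = -2)).card := by
      rw [Fintype.card_subtype]
      apply Finset.card_bij (fun a _ => a) ?_ (fun a b _ _ h => h)
        (fun b hb => ⟨b, by
          simp only [Finset.mem_filter, Finset.mem_univ, true_and] at hb ⊢
          intro h; exact hb (by linarith), rfl⟩)
      intro a ha
      simp only [Finset.mem_filter, Finset.mem_univ, true_and] at ha ⊢
      intro h; exact ha (by linarith)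
    have htot := Finset.card_filter_add_card_filter_not
      (s := (Finset.univ : Finset V)) (p := fun i => eig i = -2)
    rw [Finset.card_univ] at htot
    rw [hcs]
    omega
  -- entries of B
  have hBent : ∀ u v : V, B u v = (G.dist u v : ℝ) + (if u = v then 2 else 0) := by
    intro u v
    rw [hBdef, hD]
    by_cases h : u = v <;> simp [Matrix.one_apply, h]
  -- diameter at most 2
  have hdiam : ∀ u v : V, G.dist u v ≤ 2 := by
    by_contra hcon
    push_neg at hcon
    obtain ⟨u, v, huv⟩ := hcon
    obtain ⟨x1, ha1, hd1⟩ := myStep G hG (u := u) (v := v) (by omega)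
    obtain ⟨x2, ha2, hd2⟩ := myStep G hG (u := x1) (v := v) (by omega)
    obtain ⟨x3, ha3, hd3⟩ := myStep G hG (u := x2) (v := v) (by omega)
    rw [hd1] at hd2
    rw [hd2] at hd3
    -- distances
    have adj_dist : ∀ a b : V, G.Adj a b → G.dist a b = 1 := fun a b h =>
      SimpleGraph.dist_eq_one_iff_adj.mpr h
    have tri : ∀ a b c : V, G.dist a c ≤ G.dist a b + G.dist b c := fun a b c =>
      hG.dist_triangle
    have d01 : G.dist u x1 = 1 := adj_dist _ _ ha1
    have d12 : G.dist x1 x2 = 1 := adj_dist _ _ ha2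
    have d23 : G.dist x2 x3 = 1 := adj_dist _ _ ha3
    have d02 : G.dist u x2 = 2 := by
      have h1 := tri u x1 x2
      have h2 := tri u x2 v
      omega
    have d13 : G.dist x1 x3 = 2 := by
      have h1 := tri x1 x2 x3
      have h2 := tri x1 x3 v
      omega
    have d03 : G.dist u x3 = 3 := by
      have h1 := tri u x2 x3
      have h2 := tri u x3 v
      omega
    have hq4 := hq (Pi.single u 1 + Pi.single x1 1 - Pi.single x2 1 - Pi.single x3 1)
    rw [myQuad4] at hq4
    have hne : u ≠ x1 ∧ u ≠ x2 ∧ u ≠ x3 ∧ x1 ≠ x2 ∧ x1 ≠ x3 ∧ x2 ≠ x3 := by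
      refine ⟨?_, ?_, ?_, ?_, ?_, ?_⟩ <;> intro h <;> subst h <;>
        simp [SimpleGraph.dist_self] at d01 d12 d23 d02 d13 d03 <;> omega
    obtain ⟨h01, h02, h03, h12, h13, h23⟩ := hne
    rw [hBent u u, hBent u x1, hBent u x2, hBent u x3, hBent x1 u, hBent x1 x1,
      hBent x1 x2, hBent x1 x3, hBent x2 u, hBent x2 x1, hBent x2 x2, hBent x2 x3,
      hBent x3 u, hBent x3 x1, hBent x3 x2, hBent x3 x3] at hq4
    have hsym : ∀ a b : V, G.dist a b = G.dist b a := fun a b => SimpleGraph.dist_comm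
    rw [hsym x1 u, hsym x2 u, hsym x3 u, hsym x2 x1, hsym x3 x1, hsym x3 x2] at hq4
    rw [d01, d02, d03, d12, d13, d23] at hq4
    simp [h01, h02, h03, h12, h13, h23, h01.symm, h02.symm, h03.symm, h12.symm, h13.symm,
      h23.symm, SimpleGraph.dist_self] at hq4
    norm_num at hq4
  -- entries of B in adjacency terms
  have hBif : ∀ u v : V, B u v = if u = v then 2 else if G.Adj u v then 1 else 2 := by
    intro u v
    rw [hBent]
    by_cases h : u = v
    · simp [h, SimpleGraph.dist_self]
    · simp only [h, if_false]
      by_cases ha : G.Adj u v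
      · rw [SimpleGraph.dist_eq_one_iff_adj.mpr ha]; simp [ha]
      · have h2 : G.dist u v = 2 := by
          have hle := hdiam u v
          have hne0 : G.dist u v ≠ 0 := fun h0 => h (hG.dist_eq_zero_iff.mp h0)
          have hne1 : G.dist u v ≠ 1 := by
            intro h1
            exact ha (SimpleGraph.dist_eq_one_iff_adj.mp h1)
          omega
        rw [h2]; simp [ha]
  -- non-adjacency gives equal rows
  have hker : ∀ u v : V, u ≠ v → ¬ G.Adj u v → ∀ w, B w u = B w v := by
    intro u v huv ha w
    have hzero : (Pi.single u 1 - Pi.single v (1:ℝ)) ⬝ᵥ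
        (B *ᵥ (Pi.single u 1 - Pi.single v 1)) = 0 := by
      have hvu : ¬ G.Adj v u := fun h => ha h.symm
      rw [myQuad2, hBif u u, hBif v v, hBif u v, hBif v u]
      simp [huv, huv.symm, ha, hvu]
    have hmv : B *ᵥ (Pi.single u 1 - Pi.single v 1) = 0 := by
      have := (hBpsd.dotProduct_mulVec_zero_iff (Pi.single u 1 - Pi.single v 1)).mp
      apply this
      simpa using hzero
    have := congrFun hmv w
    simp [Matrix.mulVec_sub, Matrix.mulVec_single, sub_eq_zero] at this
    exact this
  -- the non-adjacency equivalence relation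
  have requiv : Equivalence (fun u v : V => ¬ G.Adj u v) := by
    constructor
    · intro u; exact G.irrefl
    · intro u v h hvu; exact h hvu.symm
    · intro u v w huv hvw hadj
      by_cases h1 : u = v
      · subst h1; exact hvw hadj
      by_cases h2 : v = w
      · subst h2; exact huv hadj
      by_cases h3 : u = w
      · subst h3; exact G.irrefl hadj
      · have hr := hker u v h1 huv w
        rw [hBif w u, hBif w v] at hr
        have hwu : w ≠ u := fun h => h3 h.symm
        have hwv : w ≠ v := fun h => h2 h.symm
        have hAwu : G.Adj w u := hadj.symm
        have hAwv : ¬ G.Adj w v := fun h => hvw h.symm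
        rw [if_neg hwu, if_neg hwv, if_pos hAwu, if_neg hAwv] at hr
        norm_num at hr
  let s : Setoid V := ⟨fun u v => ¬ G.Adj u v, requiv⟩
  letI : DecidableEq (Quotient s) := Classical.decEq _
  have hcardQ : Fintype.card (Quotient s) = k := by
    -- upper bound : k = rank B ≤ card Q
    set F : Matrix V (Quotient s) ℝ :=
      Matrix.of fun v c => if Quotient.mk s v = c then 1 else 0 with hF
    set N : Matrix (Quotient s) V ℝ :=
      Matrix.of fun c v => if Quotient.mk s v = c then 2 else 1 with hN
    have hFN : B = F * N := by
      ext u v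
      rw [Matrix.mul_apply, hBif]
      rw [Finset.sum_eq_single (Quotient.mk s u)
        (fun c _ hc => by simp [hF, Ne.symm hc])
        (fun h => absurd (Finset.mem_univ _) h)]
      simp only [hF, hN, Matrix.of_apply, if_pos rfl, one_mul]
      by_cases h : u = v
      · subst h; simp
      · by_cases ha : G.Adj u v
        · have hne : ¬ Quotient.mk s v = Quotient.mk s u :=
            fun hq => (Quotient.exact hq) ha.symm
          simp [h, ha, hne]
        · have heq : Quotient.mk s v = Quotient.mk s u :=
            Quotient.sound (fun h' => ha h'.symm)
          simp [h, ha, heq]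
    have hub : k ≤ Fintype.card (Quotient s) := by
      calc k = B.rank := hBrank.symm
        _ ≤ F.rank := by rw [hFN]; exact Matrix.rank_mul_le_left F N
        _ ≤ Fintype.card (Quotient s) := Matrix.rank_le_card_width F
    -- lower bound : card Q = rank (Pm * B * Pmᵀ) ≤ rank B = k
    set Pm : Matrix (Quotient s) V ℝ :=
      Matrix.of fun c v => if v = c.out then 1 else 0 with hPm
    set M : Matrix (Quotient s) (Quotient s) ℝ :=
      Matrix.of fun c d => if c = d then (2:ℝ) else 1 with hM
    have hsub : Pm * B * Pmᵀ = M := by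
      ext c d
      rw [Matrix.mul_apply]
      rw [Finset.sum_eq_single d.out
        (fun w _ hw => by simp [hPm, Matrix.transpose_apply, hw])
        (fun h => absurd (Finset.mem_univ _) h)]
      rw [Matrix.transpose_apply]
      simp only [hPm, Matrix.of_apply, if_pos rfl, mul_one]
      rw [Matrix.mul_apply]
      rw [Finset.sum_eq_single c.out
        (fun w _ hw => by simp [hPm, hw])
        (fun h => absurd (Finset.mem_univ _) h)]
      simp only [hPm, Matrix.of_apply, if_pos rfl, one_mul]
      rw [hBif]
      by_cases h : c = d
      · subst h; simp [hM]
      · have hout : c.out ≠ d.out := fun he => h (by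
          rw [← Quotient.out_eq c, ← Quotient.out_eq d, he])
        have hadj : G.Adj c.out d.out := by
          by_contra hna
          exact h (by
            rw [← Quotient.out_eq c, ← Quotient.out_eq d]
            exact Quotient.sound hna)
        simp [hM, h, hout, hadj]
    have hMdet : IsUnit M.det := by
      have hMeq : M = 1 + Matrix.replicateCol Unit (fun _ => (1:ℝ)) * Matrix.replicateRow Unit (fun _ => (1:ℝ)) := by
        ext c d
        rw [Matrix.add_apply, Matrix.mul_apply]
        by_cases h : c = d <;>
          simp [hM, h, Matrix.one_apply, Matrix.replicateCol_apply, Matrix.replicateRow_apply]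
        · norm_num
      rw [hMeq, Matrix.det_one_add_replicateCol_mul_replicateRow]
      apply isUnit_iff_ne_zero.mpr
      intro hz
      have hnn : (0:ℝ) ≤ (Fintype.card (Quotient s) : ℝ) := Nat.cast_nonneg _
      simp only [dotProduct, mul_one, Finset.sum_const, Finset.card_univ, nsmul_eq_mul,
        mul_one] at hz
      linarith
    have hlb : Fintype.card (Quotient s) ≤ k := by
      calc Fintype.card (Quotient s)
          = M.rank := (Matrix.rank_of_isUnit M ((Matrix.isUnit_iff_isUnit_det M).mpr hMdet)).symm
        _ = (Pm * B * Pmᵀ).rank := by rw [hsub]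
        _ ≤ (Pm * B).rank := Matrix.rank_mul_le_left _ _
        _ ≤ B.rank := Matrix.rank_mul_le_right _ _
        _ = k := hBrank
    omega
  let e : Quotient s ≃ Fin k := Fintype.equivFinOfCardEq hcardQ
  refine ⟨fun v => e (Quotient.mk s v), ?_, ?_⟩
  · intro i
    refine ⟨(e.symm i).out, ?_⟩
    simp [Quotient.out_eq]
  · intro u v
    constructor
    · intro hadj heq
      have : Quotient.mk s u = Quotient.mk s v := e.injective heq
      exact (Quotient.exact this) hadj
    · intro hne
      by_contra hadj
      exact hne (congrArg e (Quotient.sound hadj))
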